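/- Suppose 0 < r < 1 and for each n ≥ 0 and each dyadic square Δ of generation n in [0,1]², let s(Δ) be the closed vertical segment of length rₙ·2⁻ⁿ centered at the center of Δ, where rₙ ∈ (0, r]. Then for any two distinct slits s' = s(Δ') and s'' = s(Δ'') (of generations n ≥ m respectively), the relative distance Δ(s', s'') = dist(s', s'')/min{diam(s'), diam(s'')} satisfies Δ(s', s'') ≥ min{1/2, 1−r}. -/

import Mathlib

set_option maxHeartbeats 1000000


/-- The vertical slit of the dyadic square of generation `n` with indices `i, j`:
the closed vertical segment of length `r n / 2 ^ n` centered at the center of the square. -/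
noncomputable def slit (r : ℕ → ℝ) (n i j : ℕ) : Set (ℝ × ℝ) :=
  {(((i : ℝ) + 1 / 2) / 2 ^ n)} ×ˢ
    Set.Icc ((((j : ℝ) + 1 / 2) / 2 ^ n) - r n / 2 ^ (n + 1))
            ((((j : ℝ) + 1 / 2) / 2 ^ n) + r n / 2 ^ (n + 1))

/-- Distance between two subsets of the plane. -/
noncomputable def setDist (A B : Set (ℝ × ℝ)) : ℝ :=
  sInf (Set.image2 dist A B)

lemma slit_nonempty (r : ℕ → ℝ) (n i j : ℕ) (hr : 0 < r n) : (slit r n i j).Nonempty := by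
  have h0 : 0 ≤ r n / 2 ^ (n + 1) := div_nonneg hr.le (by positivity)
  refine ⟨(((i : ℝ) + 1 / 2) / 2 ^ n, ((j : ℝ) + 1 / 2) / 2 ^ n), rfl, ?_, ?_⟩ <;>
    · show _ ≤ _
      simp only
      linarith

lemma diam_slit (r : ℕ → ℝ) (n i j : ℕ) (hr : 0 < r n) :
    Metric.diam (slit r n i j) = r n / 2 ^ n := by
  have h0 : 0 ≤ r n / 2 ^ (n + 1) := div_nonneg hr.le (by positivity)
  have hiso : Isometry (fun y : ℝ => ((((i : ℝ) + 1 / 2) / 2 ^ n), y)) :=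
    Isometry.of_dist_eq (fun y y' => by simp [Prod.dist_eq, dist_nonneg])
  have heq : slit r n i j = (fun y : ℝ => ((((i : ℝ) + 1 / 2) / 2 ^ n), y)) ''
      Set.Icc ((((j : ℝ) + 1 / 2) / 2 ^ n) - r n / 2 ^ (n + 1))
              ((((j : ℝ) + 1 / 2) / 2 ^ n) + r n / 2 ^ (n + 1)) := by
    rw [slit, Set.singleton_prod]
  rw [heq, hiso.diam_image, Real.diam_Icc (by linarith)]
  have h2 : (2:ℝ) ^ (n+1) = 2 * 2 ^ n := by ring
  have h2n : (2:ℝ) ^ n ≠ 0 := by positivity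
  field_simp [h2]
  ring

lemma le_setDist {A B : Set (ℝ × ℝ)} (hA : A.Nonempty) (hB : B.Nonempty) {c : ℝ}
    (h : ∀ p ∈ A, ∀ q ∈ B, c ≤ dist p q) : c ≤ setDist A B := by
  refine le_csInf (hA.image2 hB) ?_
  rintro _ ⟨p, hp, q, hq, rfl⟩
  exact h p hp q hq


/-- If all relative slit lengths satisfy `r n ≤ rb < 1`, then any two distinct dyadic
slits have relative distance at least `min (1/2) (1 - rb)`. -/
theorem stmt_4 (r : ℕ → ℝ) (rb : ℝ) (hrb : rb < 1)
    (hr : ∀ n, 0 < r n ∧ r n ≤ rb)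
    (n m i j i' j' : ℕ) (hmn : m ≤ n)
    (hi : i < 2 ^ n) (hj : j < 2 ^ n) (hi' : i' < 2 ^ m) (hj' : j' < 2 ^ m)
    (hne : slit r n i j ≠ slit r m i' j') :
    min (1 / 2) (1 - rb) ≤
      setDist (slit r n i j) (slit r m i' j') /
        min (Metric.diam (slit r n i j)) (Metric.diam (slit r m i' j')) := by
  obtain ⟨d, rfl⟩ : ∃ d, n = m + d := ⟨n - m, (Nat.add_sub_cancel' hmn).symm⟩
  have hrn := hr (m + d)
  have hrm := hr m
  have hrb0 : 0 < rb := lt_of_lt_of_le hrn.1 hrn.2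
  have h2n : (0:ℝ) < 2 ^ (m + d) := by positivity
  have h2m : (0:ℝ) < 2 ^ m := by positivity
  rw [diam_slit r (m + d) i j hrn.1, diam_slit r m i' j' hrm.1]
  set X : ℝ := ((i : ℝ) + 1 / 2) / 2 ^ (m + d) with hX
  set X' : ℝ := ((i' : ℝ) + 1 / 2) / 2 ^ m with hX'
  have hM0 : 0 < min (r (m + d) / 2 ^ (m + d)) (r m / 2 ^ m) :=
    lt_min (div_pos hrn.1 h2n) (div_pos hrm.1 h2m)
  set k : ℤ := (2 * i + 1 : ℤ) - (2 * i' + 1) * 2 ^ d with hkdef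
  have hk : X - X' = (k : ℝ) / 2 ^ (m + d + 1) := by
    rw [hX, hX', hkdef]
    push_cast
    field_simp
    ring
  by_cases hx : X = X'
  · -- same vertical line: forces d = 0, i = i'
    have hk0' : k = 0 := by
      have h0 : (k:ℝ) / 2 ^ (m + d + 1) = 0 := by rw [← hk, hx, sub_self]
      field_simp at h0
      exact_mod_cast h0
    have heq : (2 * (i:ℤ) + 1) = (2 * i' + 1) * 2 ^ d := by
      rw [hkdef] at hk0'; linarith
    have hd0 : d = 0 := by
      rcases d with _ | d
      · rfl
      · exfalso
        have hdvd : (2:ℤ) ∣ 2 * (i:ℤ) + 1 :=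
          ⟨(2 * i' + 1) * 2 ^ d, by rw [heq]; ring⟩
        omega
    subst hd0
    have hii : i = i' := by
      simp only [pow_zero, mul_one] at heq
      omega
    subst hii
    simp only [Nat.add_zero] at hne hrn ⊢
    have hjj : j ≠ j' := fun h => hne (by rw [h])
    have h2' : (2:ℝ) ^ (m + 1) = 2 * 2 ^ m := by ring
    -- distance lower bound
    have hD : (1 - rb) / 2 ^ m ≤ setDist (slit r m i j) (slit r m i j') := by
      apply le_setDist (slit_nonempty r m i j hrm.1) (slit_nonempty r m i j' hrm.1)
      intro p hp q hq
      simp only [slit, Set.mem_prod, Set.mem_singleton_iff, Set.mem_Icc, h2'] at hp hq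
      obtain ⟨hp1, hp2, hp3⟩ := hp
      obtain ⟨hq1, hq2, hq3⟩ := hq
      have hrm1 : r m ≤ 1 := hrm.2.trans hrb.le
      -- multiply Icc bounds by 2^m
      have hp2' : ((j:ℝ) + 1/2) - r m / 2 ≤ p.2 * 2 ^ m := by
        have := mul_le_mul_of_nonneg_right hp2 h2m.le
        calc ((j:ℝ) + 1/2) - r m / 2
            = (((j:ℝ) + 1/2) / 2 ^ m - r m / (2 * 2 ^ m)) * 2 ^ m := by
              field_simp
        _ ≤ p.2 * 2 ^ m := this
      have hp3' : p.2 * 2 ^ m ≤ ((j:ℝ) + 1/2) + r m / 2 := by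
        have := mul_le_mul_of_nonneg_right hp3 h2m.le
        calc p.2 * 2 ^ m ≤ (((j:ℝ) + 1/2) / 2 ^ m + r m / (2 * 2 ^ m)) * 2 ^ m := this
        _ = ((j:ℝ) + 1/2) + r m / 2 := by field_simp
      have hq2' : ((j':ℝ) + 1/2) - r m / 2 ≤ q.2 * 2 ^ m := by
        have := mul_le_mul_of_nonneg_right hq2 h2m.le
        calc ((j':ℝ) + 1/2) - r m / 2
            = (((j':ℝ) + 1/2) / 2 ^ m - r m / (2 * 2 ^ m)) * 2 ^ m := by
              field_simp
        _ ≤ q.2 * 2 ^ m := this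
      have hq3' : q.2 * 2 ^ m ≤ ((j':ℝ) + 1/2) + r m / 2 := by
        have := mul_le_mul_of_nonneg_right hq3 h2m.le
        calc q.2 * 2 ^ m ≤ (((j':ℝ) + 1/2) / 2 ^ m + r m / (2 * 2 ^ m)) * 2 ^ m := this
        _ = ((j':ℝ) + 1/2) + r m / 2 := by field_simp
      have key : (1 - rb) / 2 ^ m ≤ |p.2 - q.2| := by
        rcases lt_or_gt_of_ne hjj with h | h
        · -- j < j'
          have h1 : (1:ℝ) ≤ (j':ℝ) - j := by
            have : (j + 1 : ℕ) ≤ j' := h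
            have := (Nat.cast_le (α := ℝ)).mpr this
            push_cast at this
            linarith
          have hle : (1 - rb) / 2 ^ m ≤ q.2 - p.2 := by
            rw [div_le_iff₀ h2m]
            nlinarith [hq2', hp3', h1, hrm.2]
          calc (1 - rb) / 2 ^ m ≤ q.2 - p.2 := hle
          _ ≤ |p.2 - q.2| := by rw [abs_sub_comm]; exact le_abs_self _
        · -- j' < j
          have h1 : (1:ℝ) ≤ (j:ℝ) - j' := by
            have : (j' + 1 : ℕ) ≤ j := h
            have := (Nat.cast_le (α := ℝ)).mpr this
            push_cast at this
            linarith
          have hle : (1 - rb) / 2 ^ m ≤ p.2 - q.2 := by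
            rw [div_le_iff₀ h2m]
            nlinarith [hp2', hq3', h1, hrm.2]
          exact hle.trans (le_abs_self _)
      calc (1 - rb) / 2 ^ m ≤ |p.2 - q.2| := key
      _ = dist p.2 q.2 := (Real.dist_eq _ _).symm
      _ ≤ dist p q := by rw [Prod.dist_eq]; exact le_max_right _ _
    rw [min_self]
    calc min (1/2 : ℝ) (1 - rb) ≤ 1 - rb := min_le_right _ _
    _ ≤ setDist (slit r m i j) (slit r m i j') / (r m / 2 ^ m) := by
        rw [le_div_iff₀ (div_pos hrm.1 h2m)]
        have hnum : (1 - rb) * r m ≤ 1 - rb := by nlinarith [hrm.1, hrm.2]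
        have h1 : (1 - rb) * (r m / 2 ^ m) ≤ (1 - rb) / 2 ^ m := by
          have e : (1 - rb) * (r m / 2 ^ m) = ((1 - rb) * r m) / 2 ^ m := by ring
          rw [e, div_le_div_iff₀ h2m h2m]
          nlinarith [mul_le_mul_of_nonneg_right hnum h2m.le]
        exact h1.trans hD
  · -- different vertical lines
    have hk0' : k ≠ 0 := by
      intro h
      apply hx
      rw [h] at hk
      simp only [Int.cast_zero, zero_div] at hk
      linarith [sub_eq_zero.mp hk]
    have hkabs : (1:ℝ) ≤ |(k:ℝ)| := by
      have h1 : (1:ℤ) ≤ |k| := Int.one_le_abs hk0'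
      rw [← Int.cast_abs]
      exact_mod_cast h1
    have h2n1 : (0:ℝ) < 2 ^ (m + d + 1) := by positivity
    have hXX : 1 / 2 ^ (m + d + 1) ≤ |X - X'| := by
      rw [hk, abs_div, abs_of_pos h2n1, div_le_div_iff₀ h2n1 h2n1]
      nlinarith [mul_le_mul_of_nonneg_right hkabs h2n1.le]
    have hD : 1 / 2 ^ (m + d + 1) ≤ setDist (slit r (m + d) i j) (slit r m i' j') := by
      apply le_setDist (slit_nonempty r (m + d) i j hrn.1) (slit_nonempty r m i' j' hrm.1)
      intro p hp q hq
      simp only [slit, Set.mem_prod, Set.mem_singleton_iff, Set.mem_Icc] at hp hq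
      calc 1 / 2 ^ (m + d + 1) ≤ |X - X'| := hXX
      _ = dist p.1 q.1 := by rw [Real.dist_eq, hp.1, hq.1]
      _ ≤ dist p q := by rw [Prod.dist_eq]; exact le_max_left _ _
    calc min (1/2 : ℝ) (1 - rb) ≤ 1/2 := min_le_left _ _
    _ ≤ _ := by
        rw [le_div_iff₀ hM0]
        have hMle : min (r (m + d) / 2 ^ (m + d)) (r m / 2 ^ m) ≤ r (m + d) / 2 ^ (m + d) :=
          min_le_left _ _
        have hrn1 : r (m + d) ≤ 1 := hrn.2.trans hrb.le
        have step : (1/2 : ℝ) * (r (m + d) / 2 ^ (m + d)) ≤ 1 / 2 ^ (m + d + 1) := by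
          have e : (1/2 : ℝ) * (r (m + d) / 2 ^ (m + d)) = r (m + d) / 2 ^ (m + d + 1) := by
            rw [show (2:ℝ) ^ (m + d + 1) = 2 * 2 ^ (m + d) by ring]; ring
          rw [e, div_le_div_iff₀ h2n1 h2n1]
          nlinarith [mul_le_mul_of_nonneg_right hrn1 h2n1.le]
        calc (1/2 : ℝ) * min (r (m + d) / 2 ^ (m + d)) (r m / 2 ^ m)
            ≤ (1/2 : ℝ) * (r (m + d) / 2 ^ (m + d)) :=
              mul_le_mul_of_nonneg_left hMle (by norm_num)
        _ ≤ 1 / 2 ^ (m + d + 1) := step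
        _ ≤ _ := hD
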